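/- Let P be a non-signalling bipartite conditional probability distribution on n-bit alphabets. The local part of P equals the maximum, over all families (p_{f,g})_{f,g : {0,1}ⁿ → {0,1}ⁿ} of non-negative reals satisfying Σ_{f,g} p_{f,g}·𝟙[x = f(u)]·𝟙[y = g(v)] ≤ P(x,y|u,v) for all x,y,u,v ∈ {0,1}ⁿ, of the quantity Σ_{f,g} p_{f,g}. -/

import Mathlib

open Finset

/-- n-bit strings. -/
abbrev Bits (n : ℕ) := Fin n → Bool

/-- A bipartite conditional "box" on n-bit alphabets: `P x y u v` is the
probability of outputs `(x, y)` given inputs `(u, v)`. -/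
abbrev Box (n : ℕ) := Bits n → Bits n → Bits n → Bits n → ℝ

/-- `P` is a bipartite conditional probability distribution. -/
def IsBox {n : ℕ} (P : Box n) : Prop :=
  (∀ x y u v, 0 ≤ P x y u v) ∧
  (∀ u v, ∑ x : Bits n, ∑ y : Bits n, P x y u v = 1)

/-- `P` is non-signalling. -/
def NonSignalling {n : ℕ} (P : Box n) : Prop :=
  (∀ y v u u', ∑ x : Bits n, P x y u v = ∑ x : Bits n, P x y u' v) ∧
  (∀ x u v v', ∑ y : Bits n, P x y u v = ∑ y : Bits n, P x y u v')

/-- The local deterministic box given by response functions `f` (Alice) and `g` (Bob). -/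
def detBox {n : ℕ} (f g : Bits n → Bits n) : Box n :=
  fun x y u v => if x = f u ∧ y = g v then 1 else 0

/-- `P` is local deterministic. -/
def IsLocalDet {n : ℕ} (P : Box n) : Prop :=
  ∃ f g : Bits n → Bits n, P = detBox f g

/-- `P` is local: a convex combination of local deterministic boxes. -/
def IsLocal {n : ℕ} (P : Box n) : Prop :=
  ∃ w : (Bits n → Bits n) × (Bits n → Bits n) → ℝ,
    (∀ fg, 0 ≤ w fg) ∧ (∑ fg, w fg = 1) ∧
    (∀ x y u v, P x y u v =
      ∑ fg : (Bits n → Bits n) × (Bits n → Bits n), w fg * detBox fg.1 fg.2 x y u v)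

/-- The local part of `P`: the maximal weight `p` such that `P` is a convex
combination of a local box (weight `p`) and a non-signalling box (weight `1 - p`). -/
noncomputable def localPart {n : ℕ} (P : Box n) : ℝ :=
  sSup {p : ℝ | 0 ≤ p ∧ p ≤ 1 ∧
    ∃ PL PNS : Box n, IsBox PL ∧ IsLocal PL ∧ IsBox PNS ∧ NonSignalling PNS ∧
      ∀ x y u v, P x y u v = p * PL x y u v + (1 - p) * PNS x y u v}

/-- Single-copy isotropic ε-PRB entries. -/
noncomputable def isoPRB1 (ε : ℝ) (x y u v : Bool) : ℝ :=
  if xor x y = (u && v) then (1 - ε) / 2 else ε / 2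

/-- The system of n independent isotropic ε-PRBs. -/
noncomputable def isoPRB (n : ℕ) (ε : ℝ) : Box n :=
  fun x y u v => ∏ i : Fin n, isoPRB1 ε (x i) (y i) (u i) (v i)

/-- Single-copy maximally biased δ-PRB entries. -/
noncomputable def biasedPRB1 (δ : ℝ) (x y u v : Bool) : ℝ :=
  if u && v then
    match x, y with
    | false, false => 0
    | true,  false => 1 / 2 - δ / 2
    | false, true  => 1 / 2 + δ / 2
    | true,  true  => 0
  else
    match x, y with
    | false, false => 1 / 2 - δ / 2
    | true,  false => 0
    | false, true  => δ
    | true,  true  => 1 / 2 - δ / 2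

/-- The system of n independent maximally biased δ-PRBs. -/
noncomputable def biasedPRB (n : ℕ) (δ : ℝ) : Box n :=
  fun x y u v => ∏ i : Fin n, biasedPRB1 δ (x i) (y i) (u i) (v i)

lemma detBox_nonneg {n : ℕ} (f g : Bits n → Bits n) (x y u v) : 0 ≤ detBox f g x y u v := by
  unfold detBox; split <;> norm_num

lemma detBox_eq_mul {n : ℕ} (f g : Bits n → Bits n) (x y u v) :
    detBox f g x y u v = (if x = f u then (1:ℝ) else 0) * (if y = g v then 1 else 0) := by
  unfold detBox; by_cases h1 : x = f u <;> by_cases h2 : y = g v <;> simp [h1, h2]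

lemma sum_x_detBox {n : ℕ} (f g : Bits n → Bits n) (y u v) :
    ∑ x : Bits n, detBox f g x y u v = if y = g v then 1 else 0 := by
  simp [detBox_eq_mul, ← Finset.sum_mul, Finset.sum_ite_eq']

lemma sum_y_detBox {n : ℕ} (f g : Bits n → Bits n) (x u v) :
    ∑ y : Bits n, detBox f g x y u v = if x = f u then 1 else 0 := by
  simp [detBox_eq_mul, ← Finset.mul_sum, Finset.sum_ite_eq']

lemma sum_sum_detBox {n : ℕ} (f g : Bits n → Bits n) (u v) :
    ∑ x : Bits n, ∑ y : Bits n, detBox f g x y u v = 1 := by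
  simp [sum_y_detBox, Finset.sum_ite_eq']

theorem stmt2 (n : ℕ) (hn : 1 ≤ n) (P : Box n) (hP : IsBox P) (hns : NonSignalling P) :
    IsGreatest {s : ℝ |
      ∃ w : (Bits n → Bits n) × (Bits n → Bits n) → ℝ,
        (∀ fg, 0 ≤ w fg) ∧
        (∀ x y u v, (∑ fg : (Bits n → Bits n) × (Bits n → Bits n),
            w fg * detBox fg.1 fg.2 x y u v) ≤ P x y u v) ∧
        s = ∑ fg, w fg} (localPart P) := by
  obtain ⟨hPnn, hPsum⟩ := hP
  set S : Set ℝ := {s : ℝ |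
      ∃ w : (Bits n → Bits n) × (Bits n → Bits n) → ℝ,
        (∀ fg, 0 ≤ w fg) ∧
        (∀ x y u v, (∑ fg : (Bits n → Bits n) × (Bits n → Bits n),
            w fg * detBox fg.1 fg.2 x y u v) ≤ P x y u v) ∧
        s = ∑ fg, w fg} with hSdef
  set K : Set (((Bits n → Bits n) × (Bits n → Bits n)) → ℝ) :=
    {w | (∀ fg, 0 ≤ w fg) ∧
      ∀ x y u v, (∑ fg : (Bits n → Bits n) × (Bits n → Bits n),
        w fg * detBox fg.1 fg.2 x y u v) ≤ P x y u v} with hKdef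
  -- basic facts about L := ∑ w * detBox for w with nonneg entries
  have hLx : ∀ (w : ((Bits n → Bits n) × (Bits n → Bits n)) → ℝ) y u v,
      (∑ x : Bits n, ∑ fg : (Bits n → Bits n) × (Bits n → Bits n),
        w fg * detBox fg.1 fg.2 x y u v) = ∑ fg, w fg * (if y = fg.2 v then 1 else 0) := by
    intro w y u v
    rw [Finset.sum_comm]
    exact Finset.sum_congr rfl fun fg _ => by rw [← Finset.mul_sum, sum_x_detBox]
  have hLy : ∀ (w : ((Bits n → Bits n) × (Bits n → Bits n)) → ℝ) x u v,
      (∑ y : Bits n, ∑ fg : (Bits n → Bits n) × (Bits n → Bits n),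
        w fg * detBox fg.1 fg.2 x y u v) = ∑ fg, w fg * (if x = fg.1 u then 1 else 0) := by
    intro w x u v
    rw [Finset.sum_comm]
    exact Finset.sum_congr rfl fun fg _ => by rw [← Finset.mul_sum, sum_y_detBox]
  have hLsum : ∀ (w : ((Bits n → Bits n) × (Bits n → Bits n)) → ℝ) u v,
      (∑ x : Bits n, ∑ y : Bits n, ∑ fg : (Bits n → Bits n) × (Bits n → Bits n),
        w fg * detBox fg.1 fg.2 x y u v) = ∑ fg, w fg := by
    intro w u v
    calc (∑ x : Bits n, ∑ y : Bits n, ∑ fg : (Bits n → Bits n) × (Bits n → Bits n),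
          w fg * detBox fg.1 fg.2 x y u v)
        = ∑ x : Bits n, ∑ fg, w fg * (if x = fg.1 u then 1 else 0) :=
          Finset.sum_congr rfl fun x _ => hLy w x u v
      _ = ∑ fg, ∑ x : Bits n, w fg * (if x = fg.1 u then 1 else 0) := Finset.sum_comm
      _ = ∑ fg, w fg := Finset.sum_congr rfl fun fg _ => by
          rw [← Finset.mul_sum]; simp [Finset.sum_ite_eq']
  have hKsum_le : ∀ w ∈ K, ∑ fg, w fg ≤ 1 := by
    intro w hw
    obtain ⟨hw0, hdom⟩ := hw
    have u0 : Bits n := fun _ => false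
    calc ∑ fg, w fg
        = ∑ x : Bits n, ∑ y : Bits n, ∑ fg, w fg * detBox fg.1 fg.2 x y u0 u0 :=
          (hLsum w u0 u0).symm
      _ ≤ ∑ x : Bits n, ∑ y : Bits n, P x y u0 u0 :=
          Finset.sum_le_sum fun x _ => Finset.sum_le_sum fun y _ => hdom x y u0 u0
      _ = 1 := hPsum u0 u0
  -- S is the image of K
  have hSK : S = (fun w => ∑ fg, w fg) '' K := by
    ext s
    constructor
    · rintro ⟨w, hw0, hdom, rfl⟩; exact ⟨w, ⟨hw0, hdom⟩, rfl⟩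
    · rintro ⟨w, ⟨hw0, hdom⟩, rfl⟩; exact ⟨w, hw0, hdom, rfl⟩
  -- K is compact
  have hKsub : K ⊆ Set.Icc (0 : ((Bits n → Bits n) × (Bits n → Bits n)) → ℝ) 1 := by
    intro w hw
    constructor
    · intro fg; exact hw.1 fg
    · intro fg
      calc w fg ≤ ∑ fg', w fg' :=
            Finset.single_le_sum (fun i _ => hw.1 i) (Finset.mem_univ fg)
        _ ≤ 1 := hKsum_le w hw
  have hKclosed : IsClosed K := by
    have : K = (⋂ fg, {w : ((Bits n → Bits n) × (Bits n → Bits n)) → ℝ | 0 ≤ w fg}) ∩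
        ⋂ x, ⋂ y, ⋂ u, ⋂ v, {w : ((Bits n → Bits n) × (Bits n → Bits n)) → ℝ |
          (∑ fg, w fg * detBox fg.1 fg.2 x y u v) ≤ P x y u v} := by
      ext w; simp [hKdef, Set.mem_iInter]
    rw [this]
    refine IsClosed.inter (isClosed_iInter fun fg =>
      isClosed_le continuous_const (continuous_apply fg)) ?_
    refine isClosed_iInter fun x => isClosed_iInter fun y => isClosed_iInter fun u =>
      isClosed_iInter fun v => isClosed_le ?_ continuous_const
    exact continuous_finset_sum _ fun fg _ => (continuous_apply fg).mul continuous_const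
  have hKcomp : IsCompact K := IsCompact.of_isClosed_subset isCompact_Icc hKclosed hKsub
  have hScomp : IsCompact S := by
    rw [hSK]
    exact hKcomp.image (continuous_finset_sum _ fun fg _ => continuous_apply fg)
  have hSne : S.Nonempty := by
    refine ⟨0, 0, fun _ => le_refl 0, fun x y u v => ?_, by simp⟩
    simpa using hPnn x y u v
  -- the defining set of localPart equals S
  have hset : {p : ℝ | 0 ≤ p ∧ p ≤ 1 ∧
      ∃ PL PNS : Box n, IsBox PL ∧ IsLocal PL ∧ IsBox PNS ∧ NonSignalling PNS ∧
        ∀ x y u v, P x y u v = p * PL x y u v + (1 - p) * PNS x y u v} = S := by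
    ext p
    constructor
    · rintro ⟨hp0, hp1, PL, PNS, hPLbox, ⟨w', hw'0, hw'1, hw'eq⟩, hPNSbox, hPNSns, heq⟩
      refine ⟨fun fg => p * w' fg, fun fg => mul_nonneg hp0 (hw'0 fg), ?_,
        by rw [← Finset.mul_sum, hw'1, mul_one]⟩
      intro x y u v
      have hL : ∑ fg, p * w' fg * detBox fg.1 fg.2 x y u v = p * PL x y u v := by
        rw [hw'eq x y u v, Finset.mul_sum]
        exact Finset.sum_congr rfl fun fg _ => by ring
      rw [hL, heq x y u v]
      have h1 := mul_nonneg (by linarith : (0:ℝ) ≤ 1 - p) (hPNSbox.1 x y u v)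
      linarith
    · rintro ⟨w, hw0, hdom, rfl⟩
      have hLnn : ∀ x y u v, (0:ℝ) ≤ ∑ fg, w fg * detBox fg.1 fg.2 x y u v :=
        fun x y u v => Finset.sum_nonneg fun fg _ =>
          mul_nonneg (hw0 fg) (detBox_nonneg _ _ _ _ _ _)
      have hs0 : (0:ℝ) ≤ ∑ fg, w fg := Finset.sum_nonneg fun fg _ => hw0 fg
      have hs1 : (∑ fg, w fg) ≤ 1 := hKsum_le w ⟨hw0, hdom⟩
      refine ⟨hs0, hs1, ?_⟩
      by_cases h1 : (∑ fg, w fg) = 1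
      · -- s = 1 : P itself is local
        have hPL : ∀ x y u v, P x y u v = ∑ fg, w fg * detBox fg.1 fg.2 x y u v := by
          intro x y u v
          have hsum0 : ∑ x' : Bits n, ∑ y' : Bits n,
              (P x' y' u v - ∑ fg, w fg * detBox fg.1 fg.2 x' y' u v) = 0 := by
            simp only [Finset.sum_sub_distrib]
            rw [hPsum u v, hLsum w u v, h1, sub_self]
          have h2 := (Finset.sum_eq_zero_iff_of_nonneg (fun x' _ =>
            Finset.sum_nonneg fun y' _ => sub_nonneg.2 (hdom x' y' u v))).1 hsum0 x
            (Finset.mem_univ x)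
          have h3 := (Finset.sum_eq_zero_iff_of_nonneg (fun y' _ =>
            sub_nonneg.2 (hdom x y' u v))).1 h2 y (Finset.mem_univ y)
          linarith
        refine ⟨fun x y u v => ∑ fg, w fg * detBox fg.1 fg.2 x y u v, P,
          ⟨hLnn, fun u v => by rw [hLsum w u v, h1]⟩,
          ⟨w, hw0, h1, fun x y u v => rfl⟩, ⟨hPnn, hPsum⟩, hns, ?_⟩
        intro x y u v
        show P x y u v = (∑ fg, w fg) * (∑ fg, w fg * detBox fg.1 fg.2 x y u v) +
          (1 - ∑ fg, w fg) * P x y u v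
        rw [h1, ← hPL x y u v]; ring
      · by_cases h0 : (∑ fg, w fg) = 0
        · -- s = 0 : trivial decomposition
          refine ⟨detBox id id, P, ⟨fun x y u v => detBox_nonneg _ _ _ _ _ _,
            fun u v => sum_sum_detBox _ _ _ _⟩, ?_, ⟨hPnn, hPsum⟩, hns, ?_⟩
          · refine ⟨fun fg => if fg = (id, id) then 1 else 0,
              fun fg => by dsimp only; split <;> norm_num, by simp, ?_⟩
            intro x y u v
            simp [Finset.sum_ite_eq', ite_mul]
          · intro x y u v
            rw [h0]; ring
        · -- 0 < s < 1
          have hs0' : (0:ℝ) < ∑ fg, w fg := lt_of_le_of_ne hs0 (Ne.symm h0)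
          have hs1' : (∑ fg, w fg) < 1 := lt_of_le_of_ne hs1 h1
          have hsne : (∑ fg, w fg) ≠ 0 := h0
          have h1sne : (1:ℝ) - ∑ fg, w fg ≠ 0 := by linarith
          refine ⟨fun x y u v => (∑ fg, w fg * detBox fg.1 fg.2 x y u v) / (∑ fg, w fg),
            fun x y u v => (P x y u v - ∑ fg, w fg * detBox fg.1 fg.2 x y u v) /
              (1 - ∑ fg, w fg), ?_, ?_, ?_, ?_, ?_⟩
          · refine ⟨fun x y u v => div_nonneg (hLnn x y u v) hs0, fun u v => ?_⟩
            simp only [← Finset.sum_div]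
            rw [hLsum w u v, div_self hsne]
          · refine ⟨fun fg => w fg / (∑ fg', w fg'), fun fg => div_nonneg (hw0 fg) hs0,
              by rw [← Finset.sum_div, div_self hsne], ?_⟩
            intro x y u v
            simp only [div_mul_eq_mul_div, ← Finset.sum_div]
          · refine ⟨fun x y u v => div_nonneg (sub_nonneg.2 (hdom x y u v)) (by linarith),
              fun u v => ?_⟩
            simp only [← Finset.sum_div, Finset.sum_sub_distrib]
            rw [hPsum u v, hLsum w u v, div_self h1sne]
          · constructor
            · intro y v u u'
              simp only [← Finset.sum_div, Finset.sum_sub_distrib]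
              rw [hns.1 y v u u', hLx w y u v, hLx w y u' v]
            · intro x u v v'
              simp only [← Finset.sum_div, Finset.sum_sub_distrib]
              rw [hns.2 x u v v', hLy w x u v, hLy w x u v']
          · intro x y u v
            field_simp
            ring
  have hloc : localPart P = sSup S := by
    unfold localPart
    rw [hset]
  constructor
  · rw [hloc]; exact hScomp.sSup_mem hSne
  · rw [hloc]; exact fun s hs => le_csSup hScomp.bddAbove hs
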